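/- Let K be a number field, 𝔓 a prime of K above 3, and μ ∈ K with 0 ≤ v_𝔓(μ) ≤ 6·v_𝔓(3). Define j = (μ+27)(μ+3)³/μ. Then v_𝔓(j) ≥ 0. -/

import Mathlib

open IsDedekindDomain NumberField

open scoped Classical

/-- The normalized additive `𝔓`-adic valuation on a number field `K`
(by convention `0` at `x = 0`). -/
noncomputable def vP {K : Type*} [Field K] [NumberField K]
    (P : HeightOneSpectrum (𝓞 K)) (x : K) : ℤ :=
  if hx : x = 0 then 0
  else -Multiplicative.toAdd (WithZero.unzero (((P.valuation K).ne_zero_iff).mpr hx))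

section aux

variable {K : Type*} [Field K] [NumberField K] (P : HeightOneSpectrum (𝓞 K))

lemma vP_eq (x : K) (hx : x ≠ 0) :
    P.valuation K x = (Multiplicative.ofAdd (-vP P x) : Multiplicative ℤ) := by
  rw [vP, dif_neg hx]
  simp [WithZero.coe_unzero (((P.valuation K).ne_zero_iff).mpr hx)]

lemma vP_mul (x y : K) (hx : x ≠ 0) (hy : y ≠ 0) :
    vP P (x * y) = vP P x + vP P y := by
  have h := (P.valuation K).map_mul x y
  rw [vP_eq P x hx, vP_eq P y hy, vP_eq P (x*y) (mul_ne_zero hx hy),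
    ← WithZero.coe_mul, WithZero.coe_inj] at h
  have : -vP P (x * y) = -vP P x + -vP P y := by
    exact Multiplicative.ofAdd.injective (by rw [ofAdd_add]; exact h)
  omega

lemma vP_one : vP P (1 : K) = 0 := by
  have h := vP_eq P (1 : K) one_ne_zero
  rw [(P.valuation K).map_one] at h
  have : (0 : ℤ) = -vP P (1 : K) := by
    have := h.symm
    rw [show ((1 : WithZero (Multiplicative ℤ)) = ((Multiplicative.ofAdd (0:ℤ) : Multiplicative ℤ) : WithZero (Multiplicative ℤ))) by rfl,
      WithZero.coe_inj] at this
    simpa [Multiplicative.ofAdd.injective.eq_iff] using this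
  omega

lemma vP_inv (x : K) (hx : x ≠ 0) : vP P x⁻¹ = -vP P x := by
  have h := vP_mul P x x⁻¹ hx (inv_ne_zero hx)
  rw [mul_inv_cancel₀ hx, vP_one] at h
  omega

lemma vP_add_ge (x y : K) (hx : x ≠ 0) (hy : y ≠ 0) (hxy : x + y ≠ 0) :
    min (vP P x) (vP P y) ≤ vP P (x + y) := by
  have h := (P.valuation K).map_add x y
  rw [vP_eq P x hx, vP_eq P y hy, vP_eq P (x+y) hxy] at h
  rcases le_max_iff.mp h with h | h <;>
  · rw [WithZero.coe_le_coe, Multiplicative.ofAdd_le] at h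
    omega

lemma vP_three (h3 : (3 : 𝓞 K) ∈ P.asIdeal) : 1 ≤ vP P (3 : K) := by
  have hdvd : P.asIdeal ∣ Ideal.span {(3 : 𝓞 K)} := by
    rwa [Ideal.dvd_span_singleton]
  have hlt := (P.valuation_lt_one_iff_dvd (K := K) (3 : 𝓞 K)).mpr hdvd
  have hcast : ((3 : 𝓞 K) : K) = (3 : K) := map_ofNat (algebraMap (𝓞 K) K) 3
  replace hlt : P.valuation K (3 : K) < 1 := by rw [← hcast]; exact hlt
  rw [
    vP_eq P (3 : K) (by norm_num)] at hlt
  rw [show ((1 : WithZero (Multiplicative ℤ)) = ((Multiplicative.ofAdd (0:ℤ) : Multiplicative ℤ) : WithZero (Multiplicative ℤ))) by rfl,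
    WithZero.coe_lt_coe, Multiplicative.ofAdd_lt] at hlt
  omega


end aux

/-- if `𝔓 | 3` and `0 ≤ v_𝔓(μ) ≤ 6·v_𝔓(3)` for a nonzero `μ`, then
`j = (μ+27)(μ+3)³/μ` satisfies `v_𝔓(j) ≥ 0`. -/
theorem stmt4 {K : Type*} [Field K] [NumberField K]
    (P : HeightOneSpectrum (𝓞 K)) (h3 : (3 : 𝓞 K) ∈ P.asIdeal)
    (μ : K) (hμ : μ ≠ 0)
    (h0 : 0 ≤ vP P μ) (h6 : vP P μ ≤ 6 * vP P (3 : K))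
    (j : K) (hj : j = (μ + 27) * (μ + 3) ^ 3 / μ) :
    0 ≤ vP P j := by
  by_cases hjz : j = 0
  · simp [vP, hjz]
  set a := vP P μ with ha
  set t := vP P (3 : K) with ht
  have ht1 : 1 ≤ t := vP_three P h3
  have h3ne : (3 : K) ≠ 0 := by norm_num
  have h27ne : (27 : K) ≠ 0 := by norm_num
  -- vP 27 = 3 * t
  have h27 : vP P (27 : K) = 3 * t := by
    have : (27 : K) = 3 * (3 * 3) := by norm_num
    rw [this, vP_mul P _ _ h3ne (by norm_num), vP_mul P _ _ h3ne h3ne, ← ht]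
    ring
  -- the factors are nonzero since j ≠ 0
  have hne1 : μ + 27 ≠ 0 := by
    intro h; apply hjz; rw [hj, h]; simp
  have hne2 : μ + 3 ≠ 0 := by
    intro h; apply hjz; rw [hj, h]; simp
  have hb : min a (3 * t) ≤ vP P (μ + 27) := by
    have := vP_add_ge P μ 27 hμ h27ne hne1
    rwa [h27, ← ha] at this
  have hc : min a t ≤ vP P (μ + 3) := by
    have := vP_add_ge P μ 3 hμ h3ne hne2
    rwa [← ht, ← ha] at this
  have hval : vP P j = vP P (μ + 27) + 3 * vP P (μ + 3) - a := by
    have hpow : vP P ((μ + 3) ^ 3) = 3 * vP P (μ + 3) := by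
      rw [show (μ + 3) ^ 3 = (μ + 3) * ((μ + 3) * (μ + 3)) by ring,
        vP_mul P _ _ hne2 (mul_ne_zero hne2 hne2), vP_mul P _ _ hne2 hne2]
      ring
    rw [hj, div_eq_mul_inv,
      vP_mul P _ _ (mul_ne_zero hne1 (pow_ne_zero 3 hne2)) (inv_ne_zero hμ),
      vP_mul P _ _ hne1 (pow_ne_zero 3 hne2), hpow, vP_inv P μ hμ, ← ha]
    ring
  rw [hval]
  omega
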